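/- Let R be a commutative ring of prime characteristic p and let f ∈ R[[T]]. Then f(X+Y) = f(X) + f(Y) holds in R[[X,Y]] if and only if the coefficient of T^n in f vanishes for every n ≥ 0 that is not a power of p. Equivalently, the endomorphisms of the additive formal group over R are exactly the series ∑_{i≥0} b_i T^{p^i}, i.e., the 'twisted power series in Frobenius' ring B{{Fr_p}}. -/

import Mathlib

/-- Substitution of a multivariate power series `g` (intended to have zero constant
coefficient) into a one-variable power series `f`, i.e. `f(g) = ∑ₙ (coeffₙ f) · gⁿ`.
Each coefficient of the result is given by the finite truncated sum, which agrees with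
the genuine substitution whenever `g` has zero constant coefficient (since then the
coefficient of a monomial `d` in `gⁿ` vanishes for `n` larger than the total degree
of `d`). -/
noncomputable def PowerSeries.substMv {σ R : Type*} [CommRing R]
    (g : MvPowerSeries σ R) (f : PowerSeries R) : MvPowerSeries σ R :=
  fun d => ∑ n ∈ Finset.range (d.sum (fun _ e => e) + 1),
    PowerSeries.coeff n f * MvPowerSeries.coeff d (g ^ n)

section Aux

open Finset MvPowerSeries Finsupp

variable {R : Type*} [CommRing R]

lemma fin2_eq (d : Fin 2 →₀ ℕ) :
    d = Finsupp.single 0 (d 0) + Finsupp.single 1 (d 1) := by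
  ext i; fin_cases i <;> simp [Finsupp.single_apply]

lemma sum_fin2 (d : Fin 2 →₀ ℕ) : d.sum (fun _ e => e) = d 0 + d 1 := by
  rw [Finsupp.sum_fintype _ _ (fun _ => rfl), Fin.sum_univ_two]

lemma coeff_add_pow' (n : ℕ) (d : Fin 2 →₀ ℕ) :
    MvPowerSeries.coeff d ((X 0 + X 1 : MvPowerSeries (Fin 2) R) ^ n)
      = if d 0 + d 1 = n then (n.choose (d 0) : R) else 0 := by
  rw [add_pow, map_sum]
  have hterm : ∀ a, (X 0 : MvPowerSeries (Fin 2) R) ^ a * X 1 ^ (n - a) * (n.choose a : MvPowerSeries (Fin 2) R)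
      = monomial (Finsupp.single 0 a + Finsupp.single 1 (n - a)) (n.choose a : R) := by
    intro a
    rw [X_pow_eq, X_pow_eq, monomial_mul_monomial, one_mul]
    rw [show ((n.choose a : ℕ) : MvPowerSeries (Fin 2) R) = monomial 0 (n.choose a : R) by
      simp [MvPowerSeries.monomial_zero_eq_C_apply]]
    rw [monomial_mul_monomial, add_zero, one_mul]
  simp_rw [hterm, MvPowerSeries.coeff_monomial]
  have hcond : ∀ a, a ∈ Finset.range (n + 1) →
      ((d = Finsupp.single 0 a + Finsupp.single 1 (n - a)) ↔ (d 0 = a ∧ d 1 = n - a)) := by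
    intro a _
    constructor
    · intro h; rw [h]; simp [Finsupp.single_apply]
    · rintro ⟨h0, h1⟩; rw [fin2_eq d, h0, h1]
  by_cases h : d 0 + d 1 = n
  · rw [if_pos h]
    rw [Finset.sum_eq_single_of_mem (d 0) (Finset.mem_range.2 (by omega))]
    · rw [if_pos (by refine (hcond _ (Finset.mem_range.2 (by omega))).2 ⟨rfl, by omega⟩)]
    · intro a ha hne
      rw [if_neg]
      intro hc
      exact hne ((hcond a ha).1 hc).1.symm
  · rw [if_neg h]
    apply Finset.sum_eq_zero
    intro a ha
    rw [if_neg]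
    intro hc
    obtain ⟨h0, h1⟩ := (hcond a ha).1 hc
    have := Finset.mem_range.1 ha
    omega

lemma coeff_X_pow' (i : Fin 2) (n : ℕ) (d : Fin 2 →₀ ℕ) :
    MvPowerSeries.coeff d ((X i : MvPowerSeries (Fin 2) R) ^ n)
      = if d = Finsupp.single i n then 1 else 0 := by
  rw [X_pow_eq, MvPowerSeries.coeff_monomial]

lemma coeff_substMv {σ : Type*} (g : MvPowerSeries σ R) (f : PowerSeries R) (d : σ →₀ ℕ) :
    MvPowerSeries.coeff d (PowerSeries.substMv g f)
      = ∑ n ∈ Finset.range (d.sum (fun _ e => e) + 1),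
        PowerSeries.coeff n f * MvPowerSeries.coeff d (g ^ n) := rfl

lemma coeff_substMv_add (f : PowerSeries R) (d : Fin 2 →₀ ℕ) :
    MvPowerSeries.coeff d (PowerSeries.substMv (X 0 + X 1 : MvPowerSeries (Fin 2) R) f)
      = PowerSeries.coeff (d 0 + d 1) f * ((d 0 + d 1).choose (d 0) : R) := by
  rw [coeff_substMv, sum_fin2]
  simp_rw [coeff_add_pow', mul_ite, mul_zero]
  rw [Finset.sum_ite_eq, if_pos (Finset.mem_range.2 (by omega))]

lemma coeff_substMv_X0 (f : PowerSeries R) (d : Fin 2 →₀ ℕ) :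
    MvPowerSeries.coeff d (PowerSeries.substMv (X 0 : MvPowerSeries (Fin 2) R) f)
      = if d 1 = 0 then PowerSeries.coeff (d 0) f else 0 := by
  rw [coeff_substMv, sum_fin2]
  simp_rw [coeff_X_pow', mul_ite, mul_one, mul_zero]
  by_cases hb : d 1 = 0
  · rw [if_pos hb]
    rw [Finset.sum_eq_single_of_mem (d 0) (Finset.mem_range.2 (by omega))]
    · rw [if_pos (by rw [fin2_eq d, hb]; simp)]
    · intro n _ hne
      rw [if_neg]
      intro hc
      apply hne
      rw [hc]
      simp
  · rw [if_neg hb]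
    apply Finset.sum_eq_zero
    intro n _
    rw [if_neg]
    intro hc
    apply hb
    rw [hc]
    simp [Finsupp.single_apply]

lemma coeff_substMv_X1 (f : PowerSeries R) (d : Fin 2 →₀ ℕ) :
    MvPowerSeries.coeff d (PowerSeries.substMv (X 1 : MvPowerSeries (Fin 2) R) f)
      = if d 0 = 0 then PowerSeries.coeff (d 1) f else 0 := by
  rw [coeff_substMv, sum_fin2]
  simp_rw [coeff_X_pow', mul_ite, mul_one, mul_zero]
  by_cases hb : d 0 = 0
  · rw [if_pos hb]
    rw [Finset.sum_eq_single_of_mem (d 1) (Finset.mem_range.2 (by omega))]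
    · rw [if_pos (by rw [fin2_eq d, hb]; simp)]
    · intro n _ hne
      rw [if_neg]
      intro hc
      apply hne
      rw [hc]
      simp
  · rw [if_neg hb]
    apply Finset.sum_eq_zero
    intro n _
    rw [if_neg]
    intro hc
    apply hb
    rw [hc]
    simp [Finsupp.single_apply]

lemma lucas_digit (p : ℕ) [hp : Fact p.Prime] (k m : ℕ) :
    (((p ^ k * m).choose (p ^ k) : ZMod p)) = (m : ZMod p) := by
  have h := Choose.choose_modEq_choose_mul_prod_range_choose
    (n := p ^ k * m) (k := p ^ k) (p := p) k
  have h2 : ((p ^ k * m).choose (p ^ k) : ZMod p)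
      = ((((p ^ k * m) / p ^ k).choose (p ^ k / p ^ k) *
          ∏ i ∈ Finset.range k, ((p ^ k * m) / p ^ i % p).choose (p ^ k / p ^ i % p) : ℕ)
        : ZMod p) := by
    have := (ZMod.intCast_eq_intCast_iff _ _ _).2 h
    exact_mod_cast this
  rw [h2]
  have hppos : 0 < p := hp.out.pos
  have e1 : p ^ k * m / p ^ k = m := Nat.mul_div_cancel_left m (pow_pos hppos k)
  have e2 : p ^ k / p ^ k = 1 := Nat.div_self (pow_pos hppos k)
  have e3 : (∏ i ∈ Finset.range k,
      ((p ^ k * m) / p ^ i % p).choose (p ^ k / p ^ i % p)) = 1 := by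
    apply Finset.prod_eq_one
    intro i hi
    have hik : i < k := Finset.mem_range.1 hi
    have : p ^ k / p ^ i % p = 0 := by
      rw [Nat.pow_div hik.le hppos]
      exact Nat.mod_eq_zero_of_dvd (dvd_pow_self p (by omega))
    rw [this, Nat.choose_zero_right]
  rw [e1, e2, e3, Nat.choose_one_right, mul_one]

lemma choose_unit (p : ℕ) [hp : Fact p.Prime] [CharP R p] (k m : ℕ) (hm : ¬ p ∣ m) :
    ∃ u : R, u * (((p ^ k * m).choose (p ^ k) : ℕ) : R) = 1 := by
  have hc : (((p ^ k * m).choose (p ^ k) : ℕ) : ZMod p) = (m : ZMod p) := lucas_digit p k m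
  have hm0 : (m : ZMod p) ≠ 0 := fun h => hm ((ZMod.natCast_eq_zero_iff m p).1 h)
  refine ⟨ZMod.castHom (dvd_refl p) R ((m : ZMod p)⁻¹), ?_⟩
  have hcast : (((p ^ k * m).choose (p ^ k) : ℕ) : R)
      = ZMod.castHom (dvd_refl p) R (((p ^ k * m).choose (p ^ k) : ℕ) : ZMod p) :=
    (map_natCast _ _).symm
  rw [hcast, ← map_mul, hc, inv_mul_cancel₀ hm0, map_one]

end Aux

/-- Over a commutative ring `R` of prime characteristic `p`, a power series
`f ∈ R[[T]]` satisfies `f(X + Y) = f(X) + f(Y)` in `R[[X,Y]]` if and only if the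
coefficient of `Tⁿ` in `f` vanishes for every `n` that is not a power of `p`:
the endomorphisms of the additive formal group over `R` are exactly the series
`∑ᵢ bᵢ T^(pⁱ)`, i.e. the twisted power series in Frobenius. -/
theorem additive_powerSeries_iff_support_prime_powers {R : Type*} [CommRing R]
    (p : ℕ) [Fact p.Prime] [CharP R p] (f : PowerSeries R) :
    (PowerSeries.substMv
          (MvPowerSeries.X 0 + MvPowerSeries.X 1 : MvPowerSeries (Fin 2) R) f
        = PowerSeries.substMv (MvPowerSeries.X 0 : MvPowerSeries (Fin 2) R) f
          + PowerSeries.substMv (MvPowerSeries.X 1 : MvPowerSeries (Fin 2) R) f)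
      ↔ ∀ n : ℕ, (∀ k : ℕ, n ≠ p ^ k) → PowerSeries.coeff n f = 0 := by
  have key : (PowerSeries.substMv
          (MvPowerSeries.X 0 + MvPowerSeries.X 1 : MvPowerSeries (Fin 2) R) f
        = PowerSeries.substMv (MvPowerSeries.X 0 : MvPowerSeries (Fin 2) R) f
          + PowerSeries.substMv (MvPowerSeries.X 1 : MvPowerSeries (Fin 2) R) f)
      ↔ ∀ a b : ℕ,
        PowerSeries.coeff (a + b) f * ((a + b).choose a : R)
          = (if b = 0 then PowerSeries.coeff a f else 0)
            + (if a = 0 then PowerSeries.coeff b f else 0) := by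
    constructor
    · intro h a b
      have hcg := congrArg
        (MvPowerSeries.coeff (Finsupp.single 0 a + Finsupp.single 1 b)) h
      rw [map_add, coeff_substMv_add, coeff_substMv_X0, coeff_substMv_X1] at hcg
      simpa [Finsupp.add_apply, Finsupp.single_apply] using hcg
    · intro h
      apply MvPowerSeries.ext
      intro d
      rw [map_add, coeff_substMv_add, coeff_substMv_X0, coeff_substMv_X1]
      exact h (d 0) (d 1)
  rw [key]
  constructor
  · intro E n hn
    rcases Nat.eq_zero_or_pos n with rfl | hnpos
    · have h00 := E 0 0
      norm_num at h00
      simpa [PowerSeries.coeff_zero_eq_constantCoeff] using h00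
    · have hp' : p.Prime := Fact.out
      obtain ⟨k, m, hnm, hpm⟩ : ∃ k m, p ^ k * m = n ∧ ¬ p ∣ m :=
        ⟨n.factorization p, n / p ^ n.factorization p,
          Nat.ordProj_mul_ordCompl_eq_self n p, Nat.not_dvd_ordCompl hp' hnpos.ne'⟩
      have hm1 : m ≠ 1 := fun h1 => hn k (by rw [← hnm, h1, mul_one])
      have hm0 : m ≠ 0 := by
        intro h0
        rw [h0, mul_zero] at hnm
        omega
      have hpk_pos : 0 < p ^ k := pow_pos hp'.pos k
      have hlt : p ^ k < n := by
        have hm2 : 2 ≤ m := by omega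
        calc p ^ k < p ^ k * 2 := by omega
          _ ≤ p ^ k * m := Nat.mul_le_mul_left _ hm2
          _ = n := hnm
      obtain ⟨u, hu⟩ := choose_unit (R := R) p k m hpm
      have hu' : u * ((n.choose (p ^ k) : ℕ) : R) = 1 := by rw [← hnm]; exact hu
      have hE : PowerSeries.coeff n f * ((n.choose (p ^ k)) : R) = 0 := by
        have h1 := E (p ^ k) (n - p ^ k)
        rw [if_neg (by omega), if_neg (by omega), add_zero,
          show p ^ k + (n - p ^ k) = n by omega] at h1
        exact h1
      calc PowerSeries.coeff n f
          = PowerSeries.coeff n f * (((n.choose (p ^ k)) : R) * u) := by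
            rw [mul_comm _ u, hu', mul_one]
        _ = (PowerSeries.coeff n f * ((n.choose (p ^ k)) : R)) * u := by ring
        _ = 0 := by rw [hE, zero_mul]
  · intro h a b
    have hp' : p.Prime := Fact.out
    rcases Nat.eq_zero_or_pos a with rfl | ha
    · rcases Nat.eq_zero_or_pos b with rfl | hb
      · have h0 : PowerSeries.coeff 0 f = 0 :=
          h 0 (fun k => (pow_pos hp'.pos k).ne)
        simp [h0]
      · rw [if_neg hb.ne', if_pos rfl]
        simp
    · rcases Nat.eq_zero_or_pos b with rfl | hb
      · rw [if_pos rfl, if_neg ha.ne']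
        simp
      · rw [if_neg hb.ne', if_neg ha.ne', add_zero]
        by_cases hpow : ∃ k, a + b = p ^ k
        · obtain ⟨k, hk⟩ := hpow
          have hdvd : p ∣ (a + b).choose a := by
            rw [hk]
            exact hp'.dvd_choose_pow (by omega) (by omega)
          rw [(CharP.cast_eq_zero_iff R p _).2 hdvd, mul_zero]
        · push_neg at hpow
          rw [h (a + b) hpow, zero_mul]
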